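/- Let Ψ be a root datum with reduced root system Φ. A dominant element λ of X^∨ (or of P^∨) is minuscule if and only if S(λ) = W·λ, where S(λ) is the smallest saturated subset containing λ and W is the Weyl group. -/

import Mathlib

/-- A subset `S` of the cocharacter lattice is saturated if for all `x ∈ S`, roots `α`, and
integers `i` between `0` and `⟨x, α⟩`, we have `x − i·α^∨ ∈ S`. -/
def IsSaturatedSet {X Xv : Type*} [AddCommGroup X] [AddCommGroup Xv]
    (p : Xv →+ X →+ ℤ) (Φ : Finset X) (cr : X → Xv) (S : Set Xv) : Prop :=
  ∀ x ∈ S, ∀ α ∈ Φ, ∀ i : ℤ,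
    ((0 ≤ i ∧ i ≤ p x α) ∨ (p x α ≤ i ∧ i ≤ 0)) → x - i • cr α ∈ S

/-- For a reduced root datum with base `Δ`, a dominant element `l` of the cocharacter lattice
is minuscule if and only if `S(l) = W·l`, where `S(l)` is the smallest saturated subset
containing `l` and `W` is the Weyl group. -/
theorem minuscule_iff_saturated_eq_weyl_orbit
    {X Xv : Type*} [AddCommGroup X] [AddCommGroup Xv]
    (p : Xv →+ X →+ ℤ) (Φ Δ : Finset X) (cr : X → Xv)
    (h0 : (0 : X) ∉ Φ)
    (h2 : ∀ α ∈ Φ, p (cr α) α = 2)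
    (hrefl : ∀ α ∈ Φ, ∀ β ∈ Φ, β - p (cr α) β • α ∈ Φ)
    (hcrrefl : ∀ α ∈ Φ, ∀ β ∈ Φ, cr (β - p (cr α) β • α) = cr β - p (cr β) α • cr α)
    (hreduced : ∀ α ∈ Φ, (2 : ℤ) • α ∉ Φ)
    (hΔΦ : (Δ : Set X) ⊆ (Φ : Set X))
    (hbase : ∀ β ∈ Φ, (∃ c : X → ℕ, β = ∑ α ∈ Δ, (c α : ℤ) • α) ∨
                      (∃ c : X → ℕ, β = -∑ α ∈ Δ, (c α : ℤ) • α))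
    (l : Xv)
    (hdom : ∀ α ∈ Δ, 0 ≤ p l α) :
    (∀ α ∈ Φ, p l α = 1 ∨ p l α = 0 ∨ p l α = -1) ↔
      (⋂₀ {S : Set Xv | IsSaturatedSet p Φ cr S ∧ l ∈ S}) =
        {μ : Xv | ∃ w ∈ Subgroup.closure
            {f : Equiv.Perm Xv | ∃ α ∈ Φ, ∀ ν : Xv, f ν = ν - p ν α • cr α},
          w l = μ} := by
  classical
  set gens : Set (Equiv.Perm Xv) :=
    {f : Equiv.Perm Xv | ∃ α ∈ Φ, ∀ ν : Xv, f ν = ν - p ν α • cr α} with hgens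
  set W := Subgroup.closure gens with hW
  -- application of the pairing to differences
  have papp : ∀ (x y : Xv) (i : ℤ) (β : X), p (x - i • y) β = p x β - i * p y β := by
    intro x y i β
    rw [map_sub, map_zsmul]; simp
  have papp2 : ∀ (ν : Xv) (β γ : X) (i : ℤ), p ν (β - i • γ) = p ν β - i * p ν γ := by
    intro ν β γ i
    rw [map_sub, map_zsmul, smul_eq_mul]
  -- reflection on X
  set sX : X → X → X := fun α β => β - p (cr α) β • α with hsX
  -- adjointness, pure algebra
  have adj : ∀ (α : X) (ν : Xv) (β : X), p (ν - p ν α • cr α) β = p ν (sX α β) := by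
    intro α ν β
    simp only [hsX]
    rw [papp, papp2]
    ring
  -- the reflection on Xv is an involution
  have hVinv : ∀ α ∈ Φ, Function.Involutive (fun ν : Xv => ν - p ν α • cr α) := by
    intro α hα ν
    simp only
    have hpa : p (ν - p ν α • cr α) α = - p ν α := by
      rw [papp, h2 α hα]; ring
    rw [hpa, neg_zsmul, sub_neg_eq_add, sub_add_cancel]
  -- the reflection on X is an involution
  have hXinv : ∀ α ∈ Φ, Function.Involutive (sX α) := by
    intro α hα β
    simp only [hsX]
    have hpa : p (cr α) (β - p (cr α) β • α) = - p (cr α) β := by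
      rw [papp2, h2 α hα]; ring
    rw [hpa, neg_zsmul, sub_neg_eq_add, sub_add_cancel]
  -- generators are self-inverse
  have hgen_inv : ∀ f ∈ gens, f⁻¹ = f := by
    rintro f ⟨α, hα, hf⟩
    have hinv : ∀ ν, f (f ν) = ν := by
      intro ν; rw [hf, hf]; exact hVinv α hα ν
    ext ν
    have h' := hinv (f⁻¹ ν)
    rwa [Equiv.Perm.inv_def, Equiv.apply_symm_apply, eq_comm] at h'
  -- generator permutations
  have hperm : ∀ α ∈ Φ, ∃ f ∈ gens, ∀ ν : Xv, f ν = ν - p ν α • cr α := by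
    intro α hα
    exact ⟨Function.Involutive.toPerm _ (hVinv α hα), ⟨α, hα, fun ν => rfl⟩, fun ν => rfl⟩
  -- adjointness over the Weyl group
  have hadjW : ∀ w ∈ W, ∀ β ∈ Φ, ∃ γ ∈ Φ, ∀ ν, p (w ν) β = p ν γ := by
    have main : ∀ w ∈ W, (∀ β ∈ Φ, ∃ γ ∈ Φ, ∀ ν, p (w ν) β = p ν γ) ∧
        (∀ β ∈ Φ, ∃ γ ∈ Φ, ∀ ν, p (w⁻¹ ν) β = p ν γ) := by
      intro w hw
      induction hw using Subgroup.closure_induction with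
      | mem f hf =>
        have base : ∀ β ∈ Φ, ∃ γ ∈ Φ, ∀ ν, p (f ν) β = p ν γ := by
          obtain ⟨α, hα, hf'⟩ := hf
          intro β hβ
          exact ⟨sX α β, hrefl α hα β hβ, fun ν => by rw [hf']; exact adj α ν β⟩
        exact ⟨base, by rw [hgen_inv f hf]; exact base⟩
      | one =>
        constructor <;>
          · intro β hβ; exact ⟨β, hβ, fun ν => by simp⟩
      | mul x y hx hy ihx ihy =>
        constructor
        · intro β hβ
          obtain ⟨γ₁, hγ₁, he₁⟩ := ihx.1 β hβ
          obtain ⟨γ₂, hγ₂, he₂⟩ := ihy.1 γ₁ hγ₁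
          exact ⟨γ₂, hγ₂, fun ν => by rw [Equiv.Perm.mul_apply, he₁, he₂]⟩
        · intro β hβ
          obtain ⟨γ₁, hγ₁, he₁⟩ := ihy.2 β hβ
          obtain ⟨γ₂, hγ₂, he₂⟩ := ihx.2 γ₁ hγ₁
          refine ⟨γ₂, hγ₂, fun ν => ?_⟩
          rw [mul_inv_rev, Equiv.Perm.mul_apply, he₁, he₂]
      | inv x hx ih =>
        exact ⟨ih.2, by rw [inv_inv]; exact ih.1⟩
    intro w hw; exact (main w hw).1
  -- reindexing sums over Φ by a reflection
  have hre : ∀ α ∈ Φ, ∀ F : X → ℤ, ∑ β ∈ Φ, F (sX α β) = ∑ β ∈ Φ, F β := by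
    intro α hα F
    exact Finset.sum_nbij' (sX α) (sX α) (fun β hβ => hrefl α hα β hβ)
      (fun β hβ => hrefl α hα β hβ) (fun β _ => hXinv α hα β) (fun β _ => hXinv α hα β)
      (fun β _ => rfl)
  -- the orbit set
  set O : Set Xv := {μ : Xv | ∃ w ∈ W, w l = μ} with hO
  constructor
  · -- minuscule → S(l) = O
    intro hm
    apply subset_antisymm
    · -- S(l) ⊆ O since O is saturated and contains l
      apply Set.sInter_subset_of_mem
      constructor
      · -- O is saturated
        rintro x ⟨w, hw, rfl⟩ α hα i hi
        obtain ⟨γ, hγ, he⟩ := hadjW w hw α hα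
        have hval : p (w l) α = p l γ := he l
        have hm' := hm γ hγ
        have hi0 : i = 0 ∨ i = p (w l) α := by omega
        rcases hi0 with rfl | rfl
        · exact ⟨w, hw, by simp⟩
        · obtain ⟨f, hf, hf'⟩ := hperm α hα
          refine ⟨f * w, mul_mem (Subgroup.subset_closure hf) hw, ?_⟩
          rw [Equiv.Perm.mul_apply, hf']
      · exact ⟨1, one_mem _, rfl⟩
    · -- O ⊆ S(l)
      rintro μ ⟨w, hw, rfl⟩
      rw [Set.mem_sInter]
      rintro S ⟨hSsat, hSl⟩
      have stab : ∀ w ∈ W, (∀ ν ∈ S, w ν ∈ S) ∧ (∀ ν ∈ S, w⁻¹ ν ∈ S) := by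
        intro w hw
        induction hw using Subgroup.closure_induction with
        | mem f hf =>
          have base : ∀ ν ∈ S, f ν ∈ S := by
            obtain ⟨α, hα, hf'⟩ := hf
            intro ν hν
            rw [hf']
            exact hSsat ν hν α hα (p ν α) (by omega)
          exact ⟨base, by rw [hgen_inv f hf]; exact base⟩
        | one => constructor <;> · intro ν hν; simpa using hν
        | mul x y hx hy ihx ihy =>
          constructor
          · intro ν hν
            rw [Equiv.Perm.mul_apply]
            exact ihx.1 _ (ihy.1 ν hν)
          · intro ν hν
            rw [mul_inv_rev, Equiv.Perm.mul_apply]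
            exact ihy.2 _ (ihx.2 ν hν)
        | inv x hx ih => exact ⟨ih.2, by rw [inv_inv]; exact ih.1⟩
      exact (stab w hw).1 l hSl
  · -- S(l) = O → minuscule
    intro hEq α hα
    by_contra hv
    -- find a root δ with ⟨l, δ⟩ ≥ 2
    obtain ⟨δ, hδΦ, hc⟩ : ∃ δ ∈ Φ, 2 ≤ p l δ := by
      rcases le_or_gt 2 (p l α) with h | h
      · exact ⟨α, hα, h⟩
      · have hle : p l α ≤ -2 := by omega
        have hnegΦ : -α ∈ Φ := by
          have h' := hrefl α hα α hα
          rw [h2 α hα, two_zsmul] at h'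
          have he : α - (α + α) = -α := by abel
          rwa [he] at h'
        refine ⟨-α, hnegΦ, ?_⟩
        rw [map_neg]; omega
    -- l - cr δ lies in S(l)
    have hmem : l - cr δ ∈ ⋂₀ {S : Set Xv | IsSaturatedSet p Φ cr S ∧ l ∈ S} := by
      rw [Set.mem_sInter]
      rintro S ⟨hSsat, hSl⟩
      have h' := hSsat l hSl δ hδΦ 1 (Or.inl ⟨by norm_num, by omega⟩)
      simpa using h'
    rw [hEq] at hmem
    obtain ⟨w, hwW, hwl⟩ := hmem
    -- invariance of the quadratic form under the Weyl group
    have hqW : ∀ w ∈ W, ∀ ν : Xv,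
        (∑ β ∈ Φ, (p (w ν) β) ^ 2) = ∑ β ∈ Φ, (p ν β) ^ 2 := by
      intro w hw
      induction hw using Subgroup.closure_induction with
      | mem f hf =>
        obtain ⟨α', hα', hf'⟩ := hf
        intro ν
        rw [hf']
        calc ∑ β ∈ Φ, (p (ν - p ν α' • cr α') β) ^ 2
            = ∑ β ∈ Φ, (p ν (sX α' β)) ^ 2 := by
              refine Finset.sum_congr rfl fun β _ => ?_
              rw [adj]
          _ = ∑ β ∈ Φ, (p ν β) ^ 2 := hre α' hα' (fun β => (p ν β) ^ 2)
      | one => intro ν; simp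
      | mul x y hx hy ihx ihy =>
        intro ν
        rw [Equiv.Perm.mul_apply, ihx, ihy]
      | inv x hx ih =>
        intro ν
        have h' := ih (x⁻¹ ν)
        rw [Equiv.Perm.inv_def, Equiv.apply_symm_apply] at h'
        exact h'.symm
    -- key identity: 2 B(l, δ∨) = ⟨l, δ⟩ B(δ∨, δ∨)
    have key1 : 2 * (∑ β ∈ Φ, p l β * p (cr δ) β)
        = p l δ * ∑ β ∈ Φ, (p (cr δ) β) ^ 2 := by
      have hinv : ∑ β ∈ Φ, p (l - p l δ • cr δ) β * p (cr δ - p (cr δ) δ • cr δ) β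
          = ∑ β ∈ Φ, p l β * p (cr δ) β := by
        calc ∑ β ∈ Φ, p (l - p l δ • cr δ) β * p (cr δ - p (cr δ) δ • cr δ) β
            = ∑ β ∈ Φ, p l (sX δ β) * p (cr δ) (sX δ β) := by
              refine Finset.sum_congr rfl fun β _ => ?_
              rw [adj, adj]
          _ = ∑ β ∈ Φ, p l β * p (cr δ) β :=
              hre δ hδΦ (fun β => p l β * p (cr δ) β)
      have hexp : ∑ β ∈ Φ, p (l - p l δ • cr δ) β * p (cr δ - p (cr δ) δ • cr δ) β
          = p l δ * (∑ β ∈ Φ, (p (cr δ) β) ^ 2) - ∑ β ∈ Φ, p l β * p (cr δ) β := by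
        rw [Finset.mul_sum, ← Finset.sum_sub_distrib]
        refine Finset.sum_congr rfl fun β _ => ?_
        rw [papp, papp, h2 δ hδΦ]
        ring
      rw [hexp] at hinv
      linarith
    -- expansion of q (l - δ∨)
    have key2 : ∑ β ∈ Φ, (p (l - cr δ) β) ^ 2
        = (∑ β ∈ Φ, (p l β) ^ 2) - 2 * (∑ β ∈ Φ, p l β * p (cr δ) β)
          + ∑ β ∈ Φ, (p (cr δ) β) ^ 2 := by
      rw [Finset.mul_sum, ← Finset.sum_sub_distrib, ← Finset.sum_add_distrib]
      refine Finset.sum_congr rfl fun β _ => ?_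
      rw [map_sub, AddMonoidHom.sub_apply]
      ring
    -- positivity
    have key3 : 4 ≤ ∑ β ∈ Φ, (p (cr δ) β) ^ 2 := by
      have h4 := Finset.single_le_sum (f := fun β => (p (cr δ) β) ^ 2)
        (fun β _ => sq_nonneg _) hδΦ
      simp only [h2 δ hδΦ] at h4
      norm_num at h4
      exact h4
    -- contradiction
    have heq : ∑ β ∈ Φ, (p (l - cr δ) β) ^ 2 = ∑ β ∈ Φ, (p l β) ^ 2 := by
      rw [← hwl]; exact hqW w hwW l
    rw [key2] at heq
    have hNN : p l δ * (∑ β ∈ Φ, (p (cr δ) β) ^ 2) = ∑ β ∈ Φ, (p (cr δ) β) ^ 2 := by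
      linarith
    nlinarith [key3, hc, hNN]
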